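/- Let f : ℝ³ → ℝ be a C³ function. Then the set of critical values of f, that is the image f''{x ∈ ℝ³ | df_x = 0} of the critical set under f, is totally disconnected. -/

import Mathlib

set_option maxHeartbeats 2000000

open Set Metric MeasureTheory

variable {E : Type*} [NormedAddCommGroup E] [NormedSpace ℝ E]

noncomputable instance tripleNAG : NormedAddCommGroup (E →L[ℝ] E →L[ℝ] E →L[ℝ] ℝ) :=
  ContinuousLinearMap.toNormedAddCommGroup (𝕜 := ℝ) (𝕜₂ := ℝ) (E := E) (F := E →L[ℝ] E →L[ℝ] ℝ) (σ₁₂ := RingHom.id ℝ)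
noncomputable instance tripleNS : NormedSpace ℝ (E →L[ℝ] E →L[ℝ] E →L[ℝ] ℝ) :=
  ContinuousLinearMap.toNormedSpace (𝕜 := ℝ) (𝕜₂ := ℝ) (E := E) (F := E →L[ℝ] E →L[ℝ] ℝ) (σ₁₂ := RingHom.id ℝ)

/-- Third-order estimate for a pair of critical points of a C³ function. -/
theorem pair_est {f : E → ℝ} (hf : ContDiff ℝ 3 f) {s : Set E} (hs : Convex ℝ s) {M : ℝ}
    (hM : ∀ z ∈ s, ‖fderiv ℝ (fderiv ℝ (fderiv ℝ f)) z‖ ≤ M)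
    {x y : E} (hx : x ∈ s) (hy : y ∈ s)
    (hx1 : fderiv ℝ f x = 0) (hy1 : fderiv ℝ f y = 0) :
    ‖f y - f x‖ ≤ 2 * M * ‖y - x‖ ^ 3 := by
  set f1 := fderiv ℝ f with hf1def
  set f2 := fderiv ℝ f1 with hf2def
  set f3 := fderiv ℝ f2 with hf3def
  have hf1 : ContDiff ℝ 2 f1 := hf.fderiv_right (by norm_num)
  have hf2 : ContDiff ℝ 1 f2 := hf1.fderiv_right (by norm_num)
  have hdf : Differentiable ℝ f := hf.differentiable (by norm_num)
  have hdf1 : Differentiable ℝ f1 := hf1.differentiable (by norm_num)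
  have hdf2 : Differentiable ℝ f2 := hf2.differentiable (by norm_num)
  have hseg : segment ℝ x y ⊆ s := hs.segment_subset hx hy
  have hxseg : x ∈ segment ℝ x y := left_mem_segment ℝ x y
  have hyseg : y ∈ segment ℝ x y := right_mem_segment ℝ x y
  have hcs : Convex ℝ (segment ℝ x y) := convex_segment x y
  -- every point of the segment is x + b • (y - x) with 0 ≤ b ≤ 1
  have hrep : ∀ z ∈ segment ℝ x y, ∃ b : ℝ, 0 ≤ b ∧ b ≤ 1 ∧ z - x = b • (y - x) := by
    rintro z ⟨a, b, ha, hb, hab, rfl⟩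
    refine ⟨b, hb, by linarith, ?_⟩
    have : a = 1 - b := by linarith
    subst this
    module
  have hznorm : ∀ z ∈ segment ℝ x y, ‖z - x‖ ≤ ‖y - x‖ := by
    intro z hz
    obtain ⟨b, hb0, hb1, hzb⟩ := hrep z hz
    rw [hzb, norm_smul, Real.norm_eq_abs, abs_of_nonneg hb0]
    nlinarith [norm_nonneg (y - x)]
  have hM0 : 0 ≤ M := (norm_nonneg _).trans (hM x hx)
  -- Step 1: ‖f2 z - f2 x‖ ≤ M * ‖y - x‖ on the segment
  have step1 : ∀ z ∈ segment ℝ x y, ‖f2 z - f2 x‖ ≤ M * ‖y - x‖ := by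
    intro z hz
    have := hcs.norm_image_sub_le_of_norm_fderiv_le
      (f := f2) (C := M) (fun w hw => hdf2 w) (fun w hw => by exact hM w (hseg hw)) hxseg hz
    calc ‖f2 z - f2 x‖ ≤ M * ‖z - x‖ := this
      _ ≤ M * ‖y - x‖ := by
          have := hznorm z hz
          nlinarith
  -- Step 2: ‖f1 z - f2 x (z - x)‖ ≤ M * ‖y-x‖ * ‖z - x‖
  have step2 : ∀ z ∈ segment ℝ x y, ‖f1 z - f2 x (z - x)‖ ≤ M * ‖y - x‖ * ‖z - x‖ := by
    intro z hz
    have h := hcs.norm_image_sub_le_of_norm_fderiv_le' (φ := f2 x)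
      (fun w hw => hdf1 w)
      (fun w hw => by
        rw [← hf2def]
        exact step1 w hw) hxseg hz
    rw [hx1] at h
    simpa using h
  -- at y : ‖f2 x (y - x)‖ ≤ M * ‖y - x‖^2
  have hyest : ‖f2 x (y - x)‖ ≤ M * ‖y - x‖ ^ 2 := by
    have h := step2 y hyseg
    rw [hy1] at h
    simp only [zero_sub, norm_neg] at h
    calc ‖f2 x (y - x)‖ ≤ M * ‖y - x‖ * ‖y - x‖ := h
      _ = M * ‖y - x‖ ^ 2 := by ring
  -- Step 3: ‖f1 z‖ ≤ 2 * M * ‖y - x‖^2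
  have step3 : ∀ z ∈ segment ℝ x y, ‖f1 z‖ ≤ 2 * M * ‖y - x‖ ^ 2 := by
    intro z hz
    obtain ⟨b, hb0, hb1, hzb⟩ := hrep z hz
    have h2 := step2 z hz
    have hlin : ‖f2 x (z - x)‖ ≤ M * ‖y - x‖ ^ 2 := by
      rw [hzb, ContinuousLinearMap.map_smul, norm_smul, Real.norm_eq_abs, abs_of_nonneg hb0]
      calc b * ‖f2 x (y - x)‖ ≤ 1 * (M * ‖y - x‖ ^ 2) := by
            have := norm_nonneg (f2 x (y - x))
            nlinarith
        _ = M * ‖y - x‖ ^ 2 := by ring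
    have hzx := hznorm z hz
    calc ‖f1 z‖ ≤ ‖f2 x (z - x)‖ + ‖f1 z - f2 x (z - x)‖ := by
          calc ‖f1 z‖ = ‖f2 x (z - x) + (f1 z - f2 x (z - x))‖ := by
                rw [add_sub_cancel]
            _ ≤ ‖f2 x (z - x)‖ + ‖f1 z - f2 x (z - x)‖ := norm_add_le _ _
      _ ≤ M * ‖y - x‖ ^ 2 + M * ‖y - x‖ * ‖z - x‖ := by linarith
      _ ≤ 2 * M * ‖y - x‖ ^ 2 := by nlinarith [norm_nonneg (y - x), norm_nonneg (z - x), mul_le_mul_of_nonneg_left hzx (mul_nonneg hM0 (norm_nonneg (y - x)))]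
  -- Step 4: conclude
  have h4 := hcs.norm_image_sub_le_of_norm_fderiv_le
    (fun w hw => hdf w) (fun w hw => step3 w hw) hxseg hyseg
  calc ‖f y - f x‖ ≤ 2 * M * ‖y - x‖ ^ 2 * ‖y - x‖ := h4
    _ = 2 * M * ‖y - x‖ ^ 3 := by ring


local notation "E3" => EuclideanSpace ℝ (Fin 3)
local notation "E2" => EuclideanSpace ℝ (Fin 2)

/-- drop the i-th coordinate -/
noncomputable def dropCoord (i : Fin 3) (x : E3) : E2 := WithLp.toLp 2 (fun j => x (i.succAbove j))

theorem dropCoord_sub (i : Fin 3) (x y : E3) :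
    dropCoord i (x - y) = dropCoord i x - dropCoord i y := by ext j; simp [dropCoord]

theorem norm_dropCoord (i : Fin 3) (d : E3) :
    ‖dropCoord i d‖ = Real.sqrt (∑ k : Fin 2, ‖d (i.succAbove k)‖ ^ 2) := by
  rw [EuclideanSpace.norm_eq]
  rfl

theorem norm_le_abs_add_dropCoord (i : Fin 3) (d : E3) :
    ‖d‖ ≤ ‖d i‖ + ‖dropCoord i d‖ := by
  rw [EuclideanSpace.norm_eq, norm_dropCoord]
  rw [Fin.sum_univ_succAbove (fun j => ‖d j‖ ^ 2) i]
  have h1 : (0:ℝ) ≤ ∑ k : Fin 2, ‖d (i.succAbove k)‖ ^ 2 :=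
    Finset.sum_nonneg fun k _ => sq_nonneg _
  have h2 := Real.sq_sqrt h1
  have h3 := Real.sqrt_nonneg (∑ k : Fin 2, ‖d (i.succAbove k)‖ ^ 2)
  have : ‖d i‖ ^ 2 + ∑ k : Fin 2, ‖d (i.succAbove k)‖ ^ 2
      ≤ (‖d i‖ + Real.sqrt (∑ k : Fin 2, ‖d (i.succAbove k)‖ ^ 2)) ^ 2 := by
    nlinarith [norm_nonneg (d i)]
  calc Real.sqrt (‖d i‖ ^ 2 + ∑ k : Fin 2, ‖d (i.succAbove k)‖ ^ 2)
      ≤ Real.sqrt ((‖d i‖ + Real.sqrt (∑ k : Fin 2, ‖d (i.succAbove k)‖ ^ 2)) ^ 2) :=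
        Real.sqrt_le_sqrt this
    _ = ‖d i‖ + Real.sqrt (∑ k : Fin 2, ‖d (i.succAbove k)‖ ^ 2) := by
        rw [Real.sqrt_sq (by positivity)]

theorem abs_coord_le_dropCoord (i : Fin 3) (d : E3) (k : Fin 2) :
    ‖d (i.succAbove k)‖ ≤ ‖dropCoord i d‖ := by
  rw [norm_dropCoord]
  have : ‖d (i.succAbove k)‖ ^ 2 ≤ ∑ m : Fin 2, ‖d (i.succAbove m)‖ ^ 2 :=
    Finset.single_le_sum (f := fun m => ‖d (i.succAbove m)‖ ^ 2)
      (fun m _ => sq_nonneg _) (Finset.mem_univ k)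
  calc ‖d (i.succAbove k)‖ = Real.sqrt (‖d (i.succAbove k)‖ ^ 2) := by
        rw [Real.sqrt_sq (norm_nonneg _)]
    _ ≤ _ := Real.sqrt_le_sqrt this

theorem clm_decomp (ℓ : E3 →L[ℝ] ℝ) (d : E3) :
    ℓ d = ∑ j : Fin 3, d j * ℓ (EuclideanSpace.single j 1) := by
  have hd : d = ∑ j : Fin 3, d j • EuclideanSpace.single j (1:ℝ) := by
    ext k
    have : (∑ j : Fin 3, d j • EuclideanSpace.single j (1:ℝ)) k
        = ∑ j : Fin 3, (d j • EuclideanSpace.single j (1:ℝ)) k := by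
      rw [WithLp.ofLp_sum]; exact Finset.sum_apply k Finset.univ _
    rw [this]
    simp [EuclideanSpace.single_apply, smul_eq_mul]
  conv_lhs => rw [hd]
  rw [map_sum]
  simp [smul_eq_mul]

/-- If `|ℓ d| ≤ (c/2)‖d‖` where `c = |ℓ eᵢ| > 0`, then `d` is controlled by its
projection away from coordinate `i`. -/
theorem key_biLip (ℓ : E3 →L[ℝ] ℝ) (i : Fin 3)
    (hc : 0 < |ℓ (EuclideanSpace.single i 1)|) (d : E3)
    (hd : |ℓ d| ≤ |ℓ (EuclideanSpace.single i 1)| / 2 * ‖d‖) :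
    ‖d‖ ≤ (4 * ‖ℓ‖ + 2 * |ℓ (EuclideanSpace.single i 1)|) / |ℓ (EuclideanSpace.single i 1)|
      * ‖dropCoord i d‖ := by
  set c := |ℓ (EuclideanSpace.single i 1)| with hcdef
  have hdecomp := clm_decomp ℓ d
  rw [Fin.sum_univ_succAbove (fun j => d j * ℓ (EuclideanSpace.single j 1)) i] at hdecomp
  have hbnd : ∀ j : Fin 3, |ℓ (EuclideanSpace.single j 1)| ≤ ‖ℓ‖ := by
    intro j
    calc |ℓ (EuclideanSpace.single j 1)| ≤ ‖ℓ‖ * ‖EuclideanSpace.single j (1:ℝ)‖ :=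
          ℓ.le_opNorm _
      _ = ‖ℓ‖ := by rw [EuclideanSpace.norm_single]; simp
  -- |d i| * c ≤ |ℓ d| + 2‖ℓ‖‖π d‖
  have hsum : |∑ k : Fin 2, d (i.succAbove k) * ℓ (EuclideanSpace.single (i.succAbove k) 1)|
      ≤ 2 * ‖ℓ‖ * ‖dropCoord i d‖ := by
    calc |∑ k : Fin 2, d (i.succAbove k) * ℓ (EuclideanSpace.single (i.succAbove k) 1)|
        ≤ ∑ k : Fin 2, |d (i.succAbove k) * ℓ (EuclideanSpace.single (i.succAbove k) 1)| :=
          Finset.abs_sum_le_sum_abs _ _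
      _ ≤ ∑ k : Fin 2, ‖dropCoord i d‖ * ‖ℓ‖ := by
          apply Finset.sum_le_sum
          intro k _
          rw [abs_mul]
          have h1 := abs_coord_le_dropCoord i d k
          have h2 := hbnd (i.succAbove k)
          have := abs_nonneg (d (i.succAbove k))
          have := abs_nonneg (ℓ (EuclideanSpace.single (i.succAbove k) 1))
          have := norm_nonneg (dropCoord i d)
          rw [Real.norm_eq_abs] at h1
          nlinarith
      _ = 2 * ‖ℓ‖ * ‖dropCoord i d‖ := by
          simp [Finset.sum_const]
          ring
  have hdi : |d i| * c ≤ |ℓ d| + 2 * ‖ℓ‖ * ‖dropCoord i d‖ := by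
    have : d i * ℓ (EuclideanSpace.single i 1)
        = ℓ d - ∑ k : Fin 2, d (i.succAbove k) * ℓ (EuclideanSpace.single (i.succAbove k) 1) := by
      rw [hdecomp]; ring
    calc |d i| * c = |d i * ℓ (EuclideanSpace.single i 1)| := by rw [abs_mul]
      _ = |ℓ d - ∑ k : Fin 2, d (i.succAbove k) * ℓ (EuclideanSpace.single (i.succAbove k) 1)| := by
          rw [this]
      _ ≤ |ℓ d| + |∑ k : Fin 2, d (i.succAbove k) * ℓ (EuclideanSpace.single (i.succAbove k) 1)| :=
          abs_sub _ _
      _ ≤ |ℓ d| + 2 * ‖ℓ‖ * ‖dropCoord i d‖ := by linarith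
  have hnorm := norm_le_abs_add_dropCoord i d
  rw [Real.norm_eq_abs] at hnorm
  -- combine: c‖d‖ ≤ c|d i| + c‖πd‖ ≤ (c/2)‖d‖ + 2‖ℓ‖‖πd‖ + c‖πd‖
  have hπ := norm_nonneg (dropCoord i d)
  have hcn : c * ‖d‖ ≤ c / 2 * ‖d‖ + (2 * ‖ℓ‖ + c) * ‖dropCoord i d‖ := by nlinarith
  have h2 : c / 2 * ‖d‖ ≤ (2 * ‖ℓ‖ + c) * ‖dropCoord i d‖ := by linarith
  rw [div_mul_eq_mul_div, le_div_iff₀ hc]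
  nlinarith

/-- The image of the part of the critical set lying near a point where some auxiliary
C¹ function vanishing on it has nonzero derivative is `μH[1]`-null. -/
theorem stratum_null {f : E3 → ℝ} (hf : ContDiff ℝ 3 f)
    {g : E3 → ℝ} (hg : ContDiff ℝ 1 g) {a : E3} (hga : fderiv ℝ g a ≠ 0)
    {K' : Set E3} (hK'f : ∀ x ∈ K', fderiv ℝ f x = 0) (hK'g : ∀ x ∈ K', g x = 0) :
    ∃ r > 0, μH[1] (f '' (K' ∩ ball a r)) = 0 := by
  classical
  set ℓ := fderiv ℝ g a with hℓ
  -- find a coordinate where ℓ is nonzero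
  have hex : ∃ i : Fin 3, ℓ (EuclideanSpace.single i 1) ≠ 0 := by
    by_contra h
    push_neg at h
    apply hga
    ext d
    rw [clm_decomp ℓ d]
    simp [h, ContinuousLinearMap.zero_apply]
  obtain ⟨i, hi⟩ := hex
  set c := |ℓ (EuclideanSpace.single i 1)| with hcdef
  have hc : 0 < c := abs_pos.mpr hi
  -- continuity of the derivative of g
  have hcont : Continuous fun x => fderiv ℝ g x := hg.continuous_fderiv (by norm_num)
  have hev : ∀ᶠ x in nhds a, ‖fderiv ℝ g x - ℓ‖ < c / 2 := by
    have hc2 : Continuous fun x => ‖fderiv ℝ g x - ℓ‖ := (hcont.sub continuous_const).norm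
    have ht : Filter.Tendsto (fun x => ‖fderiv ℝ g x - ℓ‖) (nhds a) (nhds 0) := by
      have := hc2.continuousAt (x := a)
      simpa [ContinuousAt, hℓ] using this
    exact ht.eventually_lt_const (by positivity)
  obtain ⟨r0, hr0, hball⟩ := Metric.eventually_nhds_iff_ball.mp hev
  set r := min r0 1 with hrdef
  have hr : 0 < r := lt_min hr0 one_pos
  refine ⟨r, hr, ?_⟩
  -- bound on third derivative near a
  set f3 := fderiv ℝ (fderiv ℝ (fderiv ℝ f)) with hf3
  have hf3cont : Continuous f3 := by
    have h1 : ContDiff ℝ 2 (fderiv ℝ f) := hf.fderiv_right (by norm_num)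
    have h2 : ContDiff ℝ 1 (fderiv ℝ (fderiv ℝ f)) := h1.fderiv_right (by norm_num)
    exact h2.continuous_fderiv (by norm_num)
  obtain ⟨M, hM⟩ := (isCompact_closedBall a 1).exists_bound_of_continuousOn
    hf3cont.continuousOn
  have hM0 : 0 ≤ M := (norm_nonneg _).trans (hM a (mem_closedBall_self zero_le_one))
  set U := K' ∩ ball a r with hU
  -- pair Hölder estimate on U
  have hpair : ∀ x ∈ U, ∀ y ∈ U, ‖f y - f x‖ ≤ 2 * M * ‖y - x‖ ^ 3 := by
    intro x hx y hy
    refine pair_est hf (convex_ball a r) ?_ hx.2 hy.2 (hK'f x hx.1) (hK'f y hy.1)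
    intro z hz
    apply hM
    have : r ≤ 1 := min_le_right _ _
    exact closedBall_subset_closedBall this (ball_subset_closedBall hz)
  -- bi-Lipschitz below w.r.t. dropCoord on U
  set L := (4 * ‖ℓ‖ + 2 * c) / c with hLdef
  have hL0 : 0 ≤ L := by positivity
  have hbi : ∀ x ∈ U, ∀ y ∈ U, ‖y - x‖ ≤ L * ‖dropCoord i y - dropCoord i x‖ := by
    intro x hx y hy
    have hmv := (convex_ball a r).norm_image_sub_le_of_norm_fderiv_le' (φ := ℓ)
      (f := g) (fun w _ => (hg.differentiable (by norm_num)) w)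
      (fun w hw => by
        have : w ∈ ball a r0 := ball_subset_ball (min_le_left r0 1) hw
        exact le_of_lt (hball w this)) hx.2 hy.2
    rw [hK'g x hx.1, hK'g y hy.1] at hmv
    simp only [sub_zero, zero_sub, norm_neg] at hmv
    have hld : |ℓ (y - x)| ≤ c / 2 * ‖y - x‖ := by
      rw [← Real.norm_eq_abs]
      simpa using hmv
    have := key_biLip ℓ i (hcdef ▸ hc) (y - x) hld
    rw [← dropCoord_sub]
    exact this
  -- the function F on the projection
  set S := dropCoord i '' U with hS
  set F : E2 → ℝ := fun p => if h : ∃ x, x ∈ U ∧ dropCoord i x = p then f h.choose else 0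
    with hF
  have hFval : ∀ x ∈ U, F (dropCoord i x) = f x := by
    intro x hx
    have hex2 : ∃ x', x' ∈ U ∧ dropCoord i x' = dropCoord i x := ⟨x, hx, rfl⟩
    rw [hF]
    simp only [dif_pos hex2]
    obtain ⟨hx'U, hx'π⟩ := hex2.choose_spec
    have : ‖x - hex2.choose‖ ≤ L * ‖dropCoord i x - dropCoord i hex2.choose‖ :=
      hbi hex2.choose hx'U x hx
    rw [hx'π] at this
    simp only [sub_self, norm_zero, mul_zero] at this
    have hxx : x = hex2.choose := by
      have := norm_sub_eq_zero_iff.mp (le_antisymm this (norm_nonneg _))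
      exact this
    rw [← hxx]
  have himg : f '' U = F '' S := by
    ext v
    constructor
    · rintro ⟨x, hx, rfl⟩
      exact ⟨dropCoord i x, mem_image_of_mem _ hx, hFval x hx⟩
    · rintro ⟨p, ⟨x, hx, rfl⟩, rfl⟩
      exact ⟨x, hx, (hFval x hx).symm⟩
  -- Hölder estimate for F on S
  set C : NNReal := Real.toNNReal (2 * M * L ^ 3) with hC
  have hHolder : HolderOnWith C 3 F S := by
    rintro p ⟨x, hx, rfl⟩ q ⟨y, hy, rfl⟩
    rw [hFval x hx, hFval y hy, edist_dist, edist_dist]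
    have hreal : dist (f x) (f y) ≤ 2 * M * L ^ 3 * dist (dropCoord i x) (dropCoord i y) ^ 3 := by
      rw [Real.dist_eq, dist_eq_norm]
      have h1 : ‖f x - f y‖ ≤ 2 * M * ‖x - y‖ ^ 3 := hpair y hy x hx
      have h2 : ‖x - y‖ ≤ L * ‖dropCoord i x - dropCoord i y‖ := hbi y hy x hx
      have h3 : ‖x - y‖ ^ 3 ≤ (L * ‖dropCoord i x - dropCoord i y‖) ^ 3 := by
        apply pow_le_pow_left₀ (norm_nonneg _) h2
      rw [← Real.norm_eq_abs]
      calc ‖f x - f y‖ ≤ 2 * M * ‖x - y‖ ^ 3 := h1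
        _ ≤ 2 * M * (L * ‖dropCoord i x - dropCoord i y‖) ^ 3 := by nlinarith
        _ = 2 * M * L ^ 3 * ‖dropCoord i x - dropCoord i y‖ ^ 3 := by ring
    calc ENNReal.ofReal (dist (f x) (f y))
        ≤ ENNReal.ofReal (2 * M * L ^ 3 * dist (dropCoord i x) (dropCoord i y) ^ 3) :=
          ENNReal.ofReal_le_ofReal hreal
      _ = ENNReal.ofReal (2 * M * L ^ 3) * ENNReal.ofReal (dist (dropCoord i x) (dropCoord i y) ^ 3) := by
          rw [ENNReal.ofReal_mul (by positivity)]
      _ = (C : ENNReal) * ENNReal.ofReal (dist (dropCoord i x) (dropCoord i y)) ^ ((3:NNReal):ℝ) := by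
          congr 1
          rw [show ((3:NNReal):ℝ) = (3:ℝ) by norm_num]
          rw [ENNReal.ofReal_rpow_of_nonneg dist_nonneg (by norm_num : (0:ℝ) ≤ 3)]
          congr 1
          rw [← Real.rpow_natCast (dist (dropCoord i x) (dropCoord i y)) 3]
          norm_num
  -- the projection lands in a 2-dimensional space, so μH[3] of S vanishes
  have hS3 : μH[((3:NNReal):ℝ)] S = 0 := by
    apply hausdorffMeasure_of_dimH_lt (d := (3:NNReal))
    calc dimH S ≤ dimH (univ : Set E2) := dimH_mono (subset_univ S)
      _ = ((2:ℕ) : ENNReal) := by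
          rw [Real.dimH_univ_eq_finrank]
          norm_num
      _ < ((3:NNReal) : ENNReal) := by norm_num
  have himgle := hHolder.hausdorffMeasure_image_le (by norm_num) (d := 1) zero_le_one
  rw [himg]
  apply le_antisymm _ zero_le
  calc μH[1] (F '' S) ≤ (C : ENNReal) ^ (1:ℝ) * μH[((3:NNReal):ℝ) * 1] S := himgle
    _ = 0 := by
        rw [show ((3:NNReal):ℝ) * 1 = ((3:NNReal):ℝ) by ring, hS3, mul_zero]
theorem seg_norm_le {E : Type*} [NormedAddCommGroup E] [NormedSpace ℝ E]
    {x y z : E} (hz : z ∈ segment ℝ x y) : ‖z - x‖ ≤ ‖y - x‖ := by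
  obtain ⟨a, b, ha, hb, hab, rfl⟩ := hz
  have hxy : a • x + b • y - x = b • (y - x) := by
    have : a = 1 - b := by linarith
    subst this
    module
  rw [hxy, norm_smul, Real.norm_eq_abs, abs_of_nonneg hb]
  nlinarith [norm_nonneg (y - x)]

theorem holderOnWith_of_dist {X : Type*} [PseudoMetricSpace X] {f : X → ℝ} {s : Set X} {c : ℝ}
    (hc : 0 ≤ c) (h : ∀ x ∈ s, ∀ y ∈ s, dist (f x) (f y) ≤ c * dist x y ^ 3) :
    HolderOnWith c.toNNReal 3 f s := by
  intro x hx y hy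
  rw [edist_dist, edist_dist]
  calc ENNReal.ofReal (dist (f x) (f y))
      ≤ ENNReal.ofReal (c * dist x y ^ 3) := ENNReal.ofReal_le_ofReal (h x hx y hy)
    _ = ENNReal.ofReal c * ENNReal.ofReal (dist x y ^ 3) := ENNReal.ofReal_mul hc
    _ = (c.toNNReal : ENNReal) * ENNReal.ofReal (dist x y) ^ ((3:NNReal):ℝ) := by
        congr 1
        rw [show ((3:NNReal):ℝ) = (3:ℝ) by norm_num]
        rw [ENNReal.ofReal_rpow_of_nonneg dist_nonneg (by norm_num : (0:ℝ) ≤ 3)]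
        congr 1
        rw [← Real.rpow_natCast (dist x y) 3]
        norm_num

/-- The image of the fully degenerate part of the critical set in a ball is null. -/
theorem deg_null {f : EuclideanSpace ℝ (Fin 3) → ℝ} (hf : ContDiff ℝ 3 f) (R : ℕ) :
    μH[1] (f '' ({x | fderiv ℝ f x = 0 ∧ fderiv ℝ (fderiv ℝ f) x = 0 ∧
      fderiv ℝ (fderiv ℝ (fderiv ℝ f)) x = 0} ∩ closedBall 0 R)) = 0 := by
  classical
  set f1 := fderiv ℝ f with hf1def
  set f2 := fderiv ℝ f1 with hf2def
  set f3 := fderiv ℝ f2 with hf3def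
  have hf1c : ContDiff ℝ 2 f1 := hf.fderiv_right (by norm_num)
  have hf2c : ContDiff ℝ 1 f2 := hf1c.fderiv_right (by norm_num)
  have hf3cont : Continuous f3 := hf2c.continuous_fderiv (by norm_num)
  set K3 : Set (EuclideanSpace ℝ (Fin 3)) :=
    {x | f1 x = 0 ∧ f2 x = 0 ∧ f3 x = 0} with hK3
  set B : Set (EuclideanSpace ℝ (Fin 3)) := closedBall 0 R with hB
  -- main estimate for any ε > 0
  have key : ∀ ε : ℝ, 0 < ε →
      μH[1] (f '' (K3 ∩ B)) ≤ ENNReal.ofReal (2 * ε) * μH[((3:NNReal):ℝ)] B := by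
    intro ε hε
    -- uniform continuity of f3 on B
    have hUC : UniformContinuousOn f3 B :=
      (isCompact_closedBall (0:EuclideanSpace ℝ (Fin 3)) R).uniformContinuousOn_of_continuous
        hf3cont.continuousOn
    rw [Metric.uniformContinuousOn_iff_le] at hUC
    obtain ⟨δ, hδ, hδball⟩ := hUC ε hε
    set s0 : ℝ := min δ 1 / 2 with hs0def
    have hs0 : 0 < s0 := by positivity
    -- the small cubes
    set T : (Fin 3 → ℤ) → Set (EuclideanSpace ℝ (Fin 3)) := fun k =>
      {x | ∀ j, x j ∈ Set.Ico ((k j : ℝ) * s0) (((k j : ℝ) + 1) * s0)} with hT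
    have hcover : ∀ x : EuclideanSpace ℝ (Fin 3), ∃ k, x ∈ T k := by
      intro x
      refine ⟨fun j => ⌊x j / s0⌋, fun j => ?_⟩
      constructor
      · rw [← le_div_iff₀ hs0]
        exact Int.floor_le _
      · rw [← div_lt_iff₀ hs0]
        push_cast
        exact Int.lt_floor_add_one _
    have hfloor : ∀ (k : Fin 3 → ℤ) x, x ∈ T k → ∀ j, k j = ⌊x j / s0⌋ := by
      intro k x hx j
      obtain ⟨h1, h2⟩ := hx j
      symm
      rw [Int.floor_eq_iff]
      constructor
      · rwa [le_div_iff₀ hs0]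
      · rw [div_lt_iff₀ hs0]
        push_cast at h2 ⊢
        exact h2
    have hdisj : Pairwise (Function.onFun Disjoint fun k => K3 ∩ B ∩ T k) := by
      intro k k' hkk'
      rw [Function.onFun, Set.disjoint_left]
      rintro x ⟨-, hx⟩ ⟨-, hx'⟩
      apply hkk'
      funext j
      rw [hfloor k x hx j, hfloor k' x hx' j]
    have hproj : ∀ j : Fin 3, Continuous fun x : EuclideanSpace ℝ (Fin 3) => x j := by
      intro j
      exact (continuous_apply j).comp (PiLp.continuous_ofLp 2 fun _ : Fin 3 => ℝ)
    have hmeas : ∀ k, MeasurableSet (K3 ∩ B ∩ T k) := by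
      intro k
      refine MeasurableSet.inter (MeasurableSet.inter ?_ measurableSet_closedBall) ?_
      · have h1 : IsClosed {x | f1 x = 0} :=
          isClosed_singleton.preimage (hf.continuous_fderiv (by norm_num))
        have h2 : IsClosed {x | f2 x = 0} :=
          isClosed_singleton.preimage (hf1c.continuous_fderiv (by norm_num))
        have h3 : IsClosed {x | f3 x = 0} := isClosed_singleton.preimage hf3cont
        exact ((h1.inter (h2.inter h3)).measurableSet).congr rfl
      · have : T k = ⋂ j, (fun x : EuclideanSpace ℝ (Fin 3) => x j) ⁻¹'
            Set.Ico ((k j : ℝ) * s0) (((k j : ℝ) + 1) * s0) := by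
          ext x
          simp [hT, Set.mem_iInter]
        rw [this]
        exact MeasurableSet.iInter fun j =>
          (hproj j).measurable measurableSet_Ico
    -- diameter bound for cubes
    have hdiam : ∀ (k : Fin 3 → ℤ) x, x ∈ T k → ∀ y, y ∈ T k → ‖x - y‖ ≤ min δ 1 := by
      intro k x hx y hy
      have hcoord : ∀ j, ‖x j - y j‖ ≤ s0 := by
        intro j
        obtain ⟨hx1, hx2⟩ := hx j
        obtain ⟨hy1, hy2⟩ := hy j
        rw [Real.norm_eq_abs, abs_le]
        constructor <;> nlinarith
      have : ‖x - y‖ ≤ Real.sqrt (3 * s0 ^ 2) := by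
        rw [EuclideanSpace.norm_eq]
        apply Real.sqrt_le_sqrt
        have : ∀ j : Fin 3, ‖(x - y) j‖ ^ 2 ≤ s0 ^ 2 := by
          intro j
          have h := hcoord j
          have : (x - y) j = x j - y j := rfl
          rw [this]
          nlinarith [norm_nonneg (x j - y j)]
        calc ∑ j : Fin 3, ‖(x - y) j‖ ^ 2 ≤ ∑ _j : Fin 3, s0 ^ 2 :=
              Finset.sum_le_sum fun j _ => this j
          _ = 3 * s0 ^ 2 := by simp
      calc ‖x - y‖ ≤ Real.sqrt (3 * s0 ^ 2) := this
        _ ≤ Real.sqrt ((2 * s0) ^ 2) := Real.sqrt_le_sqrt (by nlinarith)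
        _ = 2 * s0 := Real.sqrt_sq (by positivity)
        _ = min δ 1 := by rw [hs0def]; ring
    -- Hölder estimate on each piece
    have hHolder : ∀ k, HolderOnWith (2 * ε).toNNReal 3 f (K3 ∩ B ∩ T k) := by
      intro k
      apply holderOnWith_of_dist (by positivity)
      rintro x ⟨⟨hxK, hxB⟩, hxT⟩ y ⟨⟨hyK, hyB⟩, hyT⟩
      rw [Real.dist_eq, dist_eq_norm]
      have hseg : segment ℝ x y ⊆ B := (convex_closedBall _ _).segment_subset hxB hyB
      have hbound : ∀ z ∈ segment ℝ x y, ‖f3 z‖ ≤ ε := by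
        intro z hz
        have hzB : z ∈ B := hseg hz
        have hdist : dist z x ≤ δ := by
          rw [dist_eq_norm]
          calc ‖z - x‖ ≤ ‖y - x‖ := seg_norm_le hz
            _ ≤ min δ 1 := hdiam k y hyT x hxT
            _ ≤ δ := min_le_left _ _
        have := hδball z hzB x hxB hdist
        rw [hxK.2.2] at this
        rwa [dist_zero_right] at this
      have := pair_est hf (convex_segment x y) hbound
        (left_mem_segment ℝ x y) (right_mem_segment ℝ x y) hxK.1 hyK.1
      calc ‖f x - f y‖ = ‖f y - f x‖ := by rw [norm_sub_rev]
        _ ≤ 2 * ε * ‖y - x‖ ^ 3 := this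
        _ = 2 * ε * ‖x - y‖ ^ 3 := by rw [norm_sub_rev]
    -- sum over the pieces
    have hunion : K3 ∩ B = ⋃ k, K3 ∩ B ∩ T k := by
      ext x
      constructor
      · intro hx
        obtain ⟨k, hk⟩ := hcover x
        exact Set.mem_iUnion.mpr ⟨k, hx, hk⟩
      · rintro hx
        obtain ⟨k, hk⟩ := Set.mem_iUnion.mp hx
        exact hk.1
    have himgU : f '' (K3 ∩ B) = ⋃ k, f '' (K3 ∩ B ∩ T k) := by
      conv_lhs => rw [hunion]
      exact Set.image_iUnion
    calc μH[1] (f '' (K3 ∩ B)) = μH[1] (⋃ k, f '' (K3 ∩ B ∩ T k)) := by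
          rw [himgU]
      _ ≤ ∑' k, μH[1] (f '' (K3 ∩ B ∩ T k)) := measure_iUnion_le _
      _ ≤ ∑' k, ((2 * ε).toNNReal : ENNReal) * μH[((3:NNReal):ℝ) * 1] (K3 ∩ B ∩ T k) := by
          apply ENNReal.tsum_le_tsum
          intro k
          have h := (hHolder k).hausdorffMeasure_image_le (by norm_num) (d := 1) zero_le_one
          calc μH[1] (f '' (K3 ∩ B ∩ T k))
              ≤ ((2 * ε).toNNReal : ENNReal) ^ (1:ℝ) * μH[((3:NNReal):ℝ) * 1] (K3 ∩ B ∩ T k) := h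
            _ = ((2 * ε).toNNReal : ENNReal) * μH[((3:NNReal):ℝ) * 1] (K3 ∩ B ∩ T k) := by
                rw [ENNReal.rpow_one]
      _ = ((2 * ε).toNNReal : ENNReal) * ∑' k, μH[((3:NNReal):ℝ) * 1] (K3 ∩ B ∩ T k) :=
          ENNReal.tsum_mul_left
      _ = ((2 * ε).toNNReal : ENNReal) * μH[((3:NNReal):ℝ) * 1] (⋃ k, K3 ∩ B ∩ T k) := by
          rw [measure_iUnion hdisj hmeas]
      _ ≤ ENNReal.ofReal (2 * ε) * μH[((3:NNReal):ℝ)] B := by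
          rw [show ((3:NNReal):ℝ) * 1 = ((3:NNReal):ℝ) by ring]
          rw [show (((2 * ε).toNNReal : ENNReal)) = ENNReal.ofReal (2 * ε) from rfl]
          apply mul_le_mul_right
          apply measure_mono
          intro v hv
          obtain ⟨k, hk⟩ := Set.mem_iUnion.mp hv
          exact hk.1.2
  -- finiteness of μH[3] on the closed ball
  have h3fin : μH[((3:NNReal):ℝ)] B < ⊤ := by
    have h3 : ((3:NNReal):ℝ) = ((Module.finrank ℝ (EuclideanSpace ℝ (Fin 3)) : ℕ):ℝ) := by
      simp [finrank_euclideanSpace_fin]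
    rw [h3]
    exact (isCompact_closedBall _ _).measure_lt_top
  -- let ε → 0
  apply le_antisymm _ zero_le
  have hseq : Filter.Tendsto
      (fun n : ℕ => ENNReal.ofReal (2 * (1 / (n + 1))) * μH[((3:NNReal):ℝ)] B)
      Filter.atTop (nhds 0) := by
    have h1 : Filter.Tendsto (fun n : ℕ => (2 * (1 / (n + 1)) : ℝ)) Filter.atTop (nhds 0) := by
      have := tendsto_one_div_add_atTop_nhds_zero_nat (𝕜 := ℝ)
      have h2 := this.const_mul (2:ℝ)
      simpa using h2
    have h2 : Filter.Tendsto (fun n : ℕ => ENNReal.ofReal (2 * (1 / (n + 1))))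
        Filter.atTop (nhds 0) := by
      have := (ENNReal.continuous_ofReal.tendsto 0).comp h1
      simpa [Function.comp_def] using this
    have h3 := ENNReal.Tendsto.mul_const h2 (Or.inr h3fin.ne)
    simpa using h3
  refine ge_of_tendsto hseq (Filter.Eventually.of_forall fun n => ?_)
  exact key (1 / (n + 1)) (by positivity)

/-- The set of critical values of a C³ function ℝ³ → ℝ is totally disconnected. -/
theorem criticalValues_totallyDisconnected
    (f : EuclideanSpace ℝ (Fin 3) → ℝ) (hf : ContDiff ℝ 3 f) :
    IsTotallyDisconnected (f '' {x | fderiv ℝ f x = 0}) := by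
  classical
  set f1 := fderiv ℝ f with hf1def
  set f2 := fderiv ℝ f1 with hf2def
  set f3 := fderiv ℝ f2 with hf3def
  have hf1c : ContDiff ℝ 2 f1 := hf.fderiv_right (by norm_num)
  have hf2c : ContDiff ℝ 1 f2 := hf1c.fderiv_right (by norm_num)
  set K : Set (EuclideanSpace ℝ (Fin 3)) := {x | f1 x = 0} with hK
  set K2 : Set (EuclideanSpace ℝ (Fin 3)) := {x | f1 x = 0 ∧ f2 x = 0} with hK2
  set K3 : Set (EuclideanSpace ℝ (Fin 3)) := {x | f1 x = 0 ∧ f2 x = 0 ∧ f3 x = 0} with hK3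
  -- the key fact: the set of critical values is μH[1]-null
  have hnull : μH[1] (f '' K) = 0 := by
    -- stratum where f2 ≠ 0
    have cover1 : ∀ a : EuclideanSpace ℝ (Fin 3), f2 a ≠ 0 →
        ∃ r > 0, μH[1] (f '' (K ∩ Metric.ball a r)) = 0 := by
      intro a ha
      obtain ⟨v, hv⟩ : ∃ v, f2 a v ≠ 0 := by
        by_contra h
        push_neg at h
        exact ha (ContinuousLinearMap.ext h)
      obtain ⟨w, hw⟩ : ∃ w, f2 a v w ≠ 0 := by
        by_contra h
        push_neg at h
        exact hv (ContinuousLinearMap.ext h)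
      set g : EuclideanSpace ℝ (Fin 3) → ℝ := fun x => f1 x w with hg
      have hgc : ContDiff ℝ 1 g := (hf1c.of_le (by norm_num)).clm_apply contDiff_const
      have hD : HasFDerivAt g ((f1 a).comp (0 : EuclideanSpace ℝ (Fin 3) →L[ℝ]
          EuclideanSpace ℝ (Fin 3)) + (f2 a).flip w) a := by
        have h1 : HasFDerivAt f1 (f2 a) a :=
          (hf1c.differentiable (by norm_num) a).hasFDerivAt
        exact h1.clm_apply (hasFDerivAt_const w a)
      have hga : fderiv ℝ g a ≠ 0 := by
        rw [hD.fderiv]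
        intro h0
        have := congrArg (fun φ => φ v) h0
        simp [ContinuousLinearMap.flip_apply] at this
        exact hw this
      exact stratum_null hf hgc hga (K' := K) (fun x hx => hx) (fun x hx => by
        have : f1 x = 0 := hx
        simp [hg, this])
    -- stratum where f2 = 0 but f3 ≠ 0
    have cover2 : ∀ a : EuclideanSpace ℝ (Fin 3), f3 a ≠ 0 →
        ∃ r > 0, μH[1] (f '' (K2 ∩ Metric.ball a r)) = 0 := by
      intro a ha
      obtain ⟨u, hu⟩ : ∃ u, f3 a u ≠ 0 := by
        by_contra h; push_neg at h; exact ha (ContinuousLinearMap.ext h)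
      obtain ⟨v, hv⟩ : ∃ v, f3 a u v ≠ 0 := by
        by_contra h; push_neg at h; exact hu (ContinuousLinearMap.ext h)
      obtain ⟨w, hw⟩ : ∃ w, f3 a u v w ≠ 0 := by
        by_contra h; push_neg at h; exact hv (ContinuousLinearMap.ext h)
      set g : EuclideanSpace ℝ (Fin 3) → ℝ := fun x => f2 x v w with hg
      have hg1c : ContDiff ℝ 1 fun x => f2 x v := hf2c.clm_apply contDiff_const
      have hgc : ContDiff ℝ 1 g := hg1c.clm_apply contDiff_const
      have hD1 : HasFDerivAt (fun x => f2 x v) ((f2 a).comp (0 : EuclideanSpace ℝ (Fin 3) →L[ℝ]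
          EuclideanSpace ℝ (Fin 3)) + (f3 a).flip v) a := by
        have h1 : HasFDerivAt f2 (f3 a) a :=
          (hf2c.differentiable (by norm_num) a).hasFDerivAt
        exact h1.clm_apply (hasFDerivAt_const v a)
      have hD : HasFDerivAt g (((fun x => f2 x v) a).comp (0 : EuclideanSpace ℝ (Fin 3) →L[ℝ]
          EuclideanSpace ℝ (Fin 3)) + ((f2 a).comp (0 : EuclideanSpace ℝ (Fin 3) →L[ℝ]
          EuclideanSpace ℝ (Fin 3)) + (f3 a).flip v).flip w) a :=
        hD1.clm_apply (hasFDerivAt_const w a)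
      have hga : fderiv ℝ g a ≠ 0 := by
        rw [hD.fderiv]
        intro h0
        have := congrArg (fun φ => φ u) h0
        simp [ContinuousLinearMap.flip_apply] at this
        exact hw this
      exact stratum_null hf hgc hga (K' := K2) (fun x hx => hx.1) (fun x hx => by
        have : f2 x = 0 := hx.2
        simp [hg, this])
    -- assemble the three pieces
    have hsub : f '' K ⊆ (f '' K3) ∪ ((f '' {x | f1 x = 0 ∧ f2 x ≠ 0}) ∪
        (f '' {x | f1 x = 0 ∧ f2 x = 0 ∧ f3 x ≠ 0})) := by
      rintro - ⟨x, hx, rfl⟩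
      by_cases h2 : f2 x = 0
      · by_cases h3 : f3 x = 0
        · exact Or.inl ⟨x, ⟨hx, h2, h3⟩, rfl⟩
        · exact Or.inr (Or.inr ⟨x, ⟨hx, h2, h3⟩, rfl⟩)
      · exact Or.inr (Or.inl ⟨x, ⟨hx, h2⟩, rfl⟩)
    apply measure_mono_null hsub
    apply measure_union_null
    · -- K3 part
      have hK3sub : f '' K3 ⊆ ⋃ R : ℕ, f '' (K3 ∩ Metric.closedBall 0 R) := by
        rintro - ⟨x, hx, rfl⟩
        obtain ⟨n, hn⟩ := exists_nat_ge ‖x‖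
        exact Set.mem_iUnion.mpr ⟨n, ⟨x, ⟨hx, by simpa [Metric.mem_closedBall] using hn⟩, rfl⟩⟩
      apply measure_mono_null hK3sub
      apply measure_iUnion_null
      intro R
      exact deg_null hf R
    apply measure_union_null
    · -- f2 ≠ 0 stratum
      set A1 : Set (EuclideanSpace ℝ (Fin 3)) := {x | f1 x = 0 ∧ f2 x ≠ 0} with hA1
      choose! r hr hrnull using cover1
      obtain ⟨T, hTc, hTU⟩ := TopologicalSpace.isOpen_iUnion_countable
        (fun a : A1 => Metric.ball (a : EuclideanSpace ℝ (Fin 3)) (r a))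
        (fun _ => Metric.isOpen_ball)
      have hsub1 : f '' A1 ⊆ ⋃ a ∈ T, f '' (K ∩ Metric.ball (a : EuclideanSpace ℝ (Fin 3))
          (r (a : EuclideanSpace ℝ (Fin 3)))) := by
        rintro - ⟨x, hx, rfl⟩
        have hxmem : x ∈ ⋃ a : A1, Metric.ball (a : EuclideanSpace ℝ (Fin 3)) (r a) :=
          Set.mem_iUnion.mpr ⟨⟨x, hx⟩, Metric.mem_ball_self (hr x hx.2)⟩
        rw [← hTU] at hxmem
        obtain ⟨a, haT, hxa⟩ := Set.mem_iUnion₂.mp hxmem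
        exact Set.mem_biUnion haT ⟨x, ⟨hx.1, hxa⟩, rfl⟩
      apply measure_mono_null hsub1
      rw [measure_biUnion_null_iff hTc]
      intro a haT
      exact hrnull (a : EuclideanSpace ℝ (Fin 3)) a.2.2
    · -- f2 = 0, f3 ≠ 0 stratum
      set A2 : Set (EuclideanSpace ℝ (Fin 3)) := {x | f1 x = 0 ∧ f2 x = 0 ∧ f3 x ≠ 0} with hA2
      choose! r hr hrnull using cover2
      obtain ⟨T, hTc, hTU⟩ := TopologicalSpace.isOpen_iUnion_countable
        (fun a : A2 => Metric.ball (a : EuclideanSpace ℝ (Fin 3)) (r a))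
        (fun _ => Metric.isOpen_ball)
      have hsub2 : f '' A2 ⊆ ⋃ a ∈ T, f '' (K2 ∩ Metric.ball (a : EuclideanSpace ℝ (Fin 3))
          (r (a : EuclideanSpace ℝ (Fin 3)))) := by
        rintro - ⟨x, hx, rfl⟩
        have hxmem : x ∈ ⋃ a : A2, Metric.ball (a : EuclideanSpace ℝ (Fin 3)) (r a) :=
          Set.mem_iUnion.mpr ⟨⟨x, hx⟩, Metric.mem_ball_self (hr x hx.2.2)⟩
        rw [← hTU] at hxmem
        obtain ⟨a, haT, hxa⟩ := Set.mem_iUnion₂.mp hxmem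
        exact Set.mem_biUnion haT ⟨x, ⟨⟨hx.1, hx.2.1⟩, hxa⟩, rfl⟩
      apply measure_mono_null hsub2
      rw [measure_biUnion_null_iff hTc]
      intro a haT
      exact hrnull (a : EuclideanSpace ℝ (Fin 3)) a.2.2.2
  -- from null to totally disconnected
  have hvol : MeasureTheory.volume (f '' K) = 0 := by
    rw [← MeasureTheory.hausdorffMeasure_real]
    exact hnull
  intro t hts htc x hx y hy
  by_contra hne
  have hIcc : ∀ u v : ℝ, u ∈ t → v ∈ t → u < v → False := by
    intro u v hu hv huv
    have hsubI : Set.Icc u v ⊆ f '' K := (htc.Icc_subset hu hv).trans hts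
    have h1 : MeasureTheory.volume (Set.Icc u v) ≤ 0 := hvol ▸ measure_mono hsubI
    rw [Real.volume_Icc] at h1
    have : (0:ℝ) < v - u := by linarith
    have h2 : ENNReal.ofReal (v - u) = 0 := le_antisymm h1 zero_le
    rw [ENNReal.ofReal_eq_zero] at h2
    linarith
  rcases lt_or_gt_of_ne hne with h | h
  · exact hIcc x y hx hy h
  · exact hIcc y x hy hx h
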